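/- Let S = MC({S_i}_{i∈I}, K) be the multicomposition of a composable family {S_i}_{i∈I} with interfaces H = {h_i}_{i∈I} and connection policy K complying with a connection model CM, and let s = (q⃗, w⃗) be a reachable configuration of S. Then for each i ∈ I: if the local state q_{h_i} of the gateway for h_i is not one of the fresh intermediate gateway states in Q̂_{h_i}, then the projection s|_i is a reachable configuration of S_i. -/

import Mathlib

namespace CFSM

/-- Direction of a communication action: output (`!`) or input (`?`). -/
inductive Dir : Type where
  | out : Dir
  | inp : Dir
deriving DecidableEq

instance instFintypeDir : Fintype Dir :=
  ⟨{Dir.out, Dir.inp}, fun x => by cases x <;> simp⟩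

/-- An action `pq!a` (output) or `pq?a` (input) over participants `P` and messages `A`:
`snd` is the sender `p`, `rcv` the receiver `q`, `msg` the message `a`. -/
structure Act (P : Type) (A : Type) : Type where
  snd : P
  rcv : P
  dir : Dir
  msg : A

instance {P A : Type} [Finite P] [Finite A] : Finite (Act P A) :=
  Finite.of_injective (fun l => (l.snd, l.rcv, l.dir, l.msg))
    (fun a b h => by
      cases a; cases b
      simp only [Prod.mk.injEq] at h
      obtain ⟨h1, h2, h3, h4⟩ := h
      subst h1; subst h2; subst h3; subst h4; rfl)

/-- The subject of an action: the sender of an output, the receiver of an input. -/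
def Act.subject {P A : Type} (l : Act P A) : P :=
  match l.dir with
  | .out => l.snd
  | .inp => l.rcv

/-- A communicating system over participants `P` and messages `A`:
one machine (state type, initial state and transition relation) per participant. -/
structure CS (P : Type) (A : Type) : Type 1 where
  St : P → Type
  init : ∀ p, St p
  delta : ∀ p, Set (St p × Act P A × St p)

/-- All actions of the machine of participant `p` have subject `p`
(the name of the machine) and distinct endpoints. -/
def CS.WellFormed {P A : Type} (S : CS P A) : Prop :=
  ∀ p t, t ∈ S.delta p → ((t.2.1 : Act P A).subject = p ∧ t.2.1.snd ≠ t.2.1.rcv)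

/-- A configuration: a local state for each machine and a FIFO buffer
for each ordered pair of participants. -/
structure Config {P A : Type} (S : CS P A) : Type where
  st : ∀ p, S.St p
  ch : P → P → List A

/-- The initial configuration: all machines in their initial state, all channels empty. -/
def CS.initConfig {P A : Type} (S : CS P A) : Config S :=
  ⟨S.init, fun _ _ => []⟩

/-- The labelled transition relation between configurations. -/
def StepL {P A : Type} (S : CS P A) (c : Config S) (l : Act P A) (c' : Config S) : Prop :=
  match l.dir with
  | .out =>
      (c.st l.snd, l, c'.st l.snd) ∈ S.delta l.snd ∧
      (∀ p, p ≠ l.snd → c'.st p = c.st p) ∧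
      c'.ch l.snd l.rcv = c.ch l.snd l.rcv ++ [l.msg] ∧
      (∀ p q, (p, q) ≠ (l.snd, l.rcv) → c'.ch p q = c.ch p q)
  | .inp =>
      (c.st l.rcv, l, c'.st l.rcv) ∈ S.delta l.rcv ∧
      (∀ p, p ≠ l.rcv → c'.st p = c.st p) ∧
      c.ch l.snd l.rcv = l.msg :: c'.ch l.snd l.rcv ∧
      (∀ p q, (p, q) ≠ (l.snd, l.rcv) → c'.ch p q = c.ch p q)

/-- Unlabelled transition relation. -/
def Step {P A : Type} (S : CS P A) (c c' : Config S) : Prop :=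
  ∃ l, StepL S c l c'

/-- Reachability between configurations. -/
def Reach {P A : Type} (S : CS P A) : Config S → Config S → Prop :=
  Relation.ReflTransGen (Step S)

/-- The set of configurations reachable from the initial configuration. -/
def RC {P A : Type} (S : CS P A) : Set (Config S) :=
  {c | Reach S S.initConfig c}

/-- A local state is final if it has no outgoing transition. -/
def FinalSt {Q P A : Type} (δ : Set (Q × Act P A × Q)) (q : Q) : Prop :=
  ∀ l q', (q, l, q') ∉ δ

/-- A local state is receiving if it is not final and all its outgoing
transitions are labelled with input actions. -/
def ReceivingSt {Q P A : Type} (δ : Set (Q × Act P A × Q)) (q : Q) : Prop :=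
  (∃ l q', (q, l, q') ∈ δ) ∧ ∀ l q', (q, l, q') ∈ δ → (l : Act P A).dir = Dir.inp

/-- A local state is mixed if it has at least one outgoing output-labelled
transition and at least one outgoing input-labelled transition. -/
def MixedSt {Q P A : Type} (δ : Set (Q × Act P A × Q)) (q : Q) : Prop :=
  (∃ l q', (q, l, q') ∈ δ ∧ (l : Act P A).dir = Dir.out) ∧
  (∃ l q', (q, l, q') ∈ δ ∧ (l : Act P A).dir = Dir.inp)

/-- A machine has no mixed states. -/
def NoMixed {Q P A : Type} (δ : Set (Q × Act P A × Q)) : Prop :=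
  ∀ q, ¬ MixedSt δ q

/-- Deadlock configuration: all channels empty but all machines in receiving states. -/
def DeadlockConfig {P A : Type} (S : CS P A) (c : Config S) : Prop :=
  (∀ p q, c.ch p q = []) ∧ ∀ p, ReceivingSt (S.delta p) (c.st p)

def DeadlockFree {P A : Type} (S : CS P A) : Prop :=
  ∀ c ∈ RC S, ¬ DeadlockConfig S c

/-- Orphan-message configuration: all machines final but some channel nonempty. -/
def OrphanConfig {P A : Type} (S : CS P A) (c : Config S) : Prop :=
  (∀ p, FinalSt (S.delta p) (c.st p)) ∧ ∃ p q, c.ch p q ≠ []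

def OrphanFree {P A : Type} (S : CS P A) : Prop :=
  ∀ c ∈ RC S, ¬ OrphanConfig S c

/-- Unspecified reception configuration: some machine `r` is in a receiving state and,
for every input transition of `r`, the corresponding channel is nonempty with a
first element different from the expected message. -/
def URConfig {P A : Type} (S : CS P A) (c : Config S) : Prop :=
  ∃ r, ReceivingSt (S.delta r) (c.st r) ∧
    ∀ s a q', (c.st r, Act.mk s r Dir.inp a, q') ∈ S.delta r →
      (c.ch s r ≠ [] ∧ ¬ ∃ w, c.ch s r = a :: w)

def ReceptionErrorFree {P A : Type} (S : CS P A) : Prop :=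
  ∀ c ∈ RC S, ¬ URConfig S c

/-- Progress: every reachable configuration has an outgoing transition or all
machines are in final states. -/
def ProgressProp {P A : Type} (S : CS P A) : Prop :=
  ∀ c ∈ RC S, (∃ c', Step S c c') ∨ ∀ p, FinalSt (S.delta p) (c.st p)

/-- `p`-lock configuration: `p` is in a receiving state and never occurs as the
subject of an action in any transition sequence from `c`. -/
def PLockConfig {P A : Type} (S : CS P A) (c : Config S) (p : P) : Prop :=
  ReceivingSt (S.delta p) (c.st p) ∧
  ∀ c1 l c2, Reach S c c1 → StepL S c1 l c2 → l.subject ≠ p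

def LockFree {P A : Type} (S : CS P A) : Prop :=
  ∀ c ∈ RC S, ∀ p, ¬ PLockConfig S c p

section Composition

variable {I : Type} {P : I → Type} {A : Type}

/-- Messages occurring in input actions of the machine of `p`. -/
def inMsgs {Pp A : Type} (S : CS Pp A) (p : Pp) : Set A :=
  {a | ∃ q s q', (q, Act.mk s p Dir.inp a, q') ∈ S.delta p}

/-- Messages occurring in output actions of the machine of `p`. -/
def outMsgs {Pp A : Type} (S : CS Pp A) (p : Pp) : Set A :=
  {a | ∃ q r q', (q, Act.mk p r Dir.out a, q') ∈ S.delta p}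

/-- `CM` is a connection model for the interfaces `hh i` of the family `S`
(the interface `h_i` is represented by its index `i`). -/
def IsConnModel (S : ∀ i, CS (P i) A) (hh : ∀ i, P i) (CM : Set (I × A × I)) : Prop :=
  ∀ i a,
    (a ∈ inMsgs (S i) (hh i) →
      ∃ j, j ≠ i ∧ a ∈ outMsgs (S j) (hh j) ∧ (i, a, j) ∈ CM) ∧
    (a ∈ outMsgs (S i) (hh i) →
      ∃ j, j ≠ i ∧ a ∈ inMsgs (S j) (hh j) ∧ (j, a, i) ∈ CM)

/-- `CM` is a strong connection model: additionally the connecting partner is unique. -/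
def IsStrongConnModel (S : ∀ i, CS (P i) A) (hh : ∀ i, P i) (CM : Set (I × A × I)) : Prop :=
  IsConnModel S hh CM ∧
  ∀ i a,
    (a ∈ inMsgs (S i) (hh i) → ∃! j, (i, a, j) ∈ CM) ∧
    (a ∈ outMsgs (S i) (hh i) → ∃! j, (j, a, i) ∈ CM)

/-- Conditions (*) and (**) for a candidate transition relation `d` of the local
connection policy of interface `hh i` (the name `k_i` is represented by `i`). -/
def PolicySat (S : ∀ i, CS (P i) A) (hh : ∀ i, P i) (CM : Set (I × A × I)) (i : I)
    (d : Set ((S i).St (hh i) × Act I A × (S i).St (hh i))) : Prop :=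
  (∀ q r a q', (q, Act.mk r (hh i) Dir.inp a, q') ∈ (S i).delta (hh i) →
      ∃ j, j ≠ i ∧ (i, a, j) ∈ CM ∧ (q, Act.mk i j Dir.out a, q') ∈ d) ∧
  (∀ q r a q', (q, Act.mk (hh i) r Dir.out a, q') ∈ (S i).delta (hh i) →
      ∃ j, j ≠ i ∧ (j, a, i) ∈ CM ∧ (q, Act.mk j i Dir.inp a, q') ∈ d)

/-- `d` belongs to the local connection policy set `IS(M_{h_i}, CM)`:
it is a minimal relation satisfying (*) and (**).  (The states `q̇` of the
policy machine are identified with the states `q` of `M_{h_i}`.) -/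
def InIS (S : ∀ i, CS (P i) A) (hh : ∀ i, P i) (CM : Set (I × A × I)) (i : I)
    (d : Set ((S i).St (hh i) × Act I A × (S i).St (hh i))) : Prop :=
  PolicySat S hh CM i d ∧ ∀ d', d' ⊆ d → PolicySat S hh CM i d' → d' = d

/-- The communicating system (over the participant type `I` of names `k_i`)
determined by the family of transition relations `Kd` of a connection policy. -/
def policyCS (S : ∀ i, CS (P i) A) (hh : ∀ i, P i)
    (Kd : ∀ i, Set ((S i).St (hh i) × Act I A × (S i).St (hh i))) : CS I A where
  St := fun i => (S i).St (hh i)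
  init := fun i => (S i).init (hh i)
  delta := Kd

/-- `Kd` is a connection policy for the interfaces `hh` complying with `CM`. -/
def IsConnPolicy (S : ∀ i, CS (P i) A) (hh : ∀ i, P i) (CM : Set (I × A × I))
    (Kd : ∀ i, Set ((S i).St (hh i) × Act I A × (S i).St (hh i))) : Prop :=
  ∀ i, InIS S hh CM i (Kd i)

/-- States of the gateway for interface `hh i`: the original states plus one
fresh state per transition of `M_{h_i}`. -/
abbrev GWState (S : ∀ i, CS (P i) A) (hh : ∀ i, P i) (i : I) : Type :=
  (S i).St (hh i) ⊕ ((S i).St (hh i) × Act (P i) A × (S i).St (hh i))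

/-- Lifting of a local action of system `i` to the composed participant type. -/
def liftAct (i : I) (l : Act (P i) A) : Act ((j : I) × P j) A :=
  Act.mk ⟨i, l.snd⟩ ⟨i, l.rcv⟩ l.dir l.msg

/-- Transition relation of the gateway `M_{h_i} ⟲ M_{k_i}`. -/
def GWdelta (S : ∀ i, CS (P i) A) (hh : ∀ i, P i)
    (Kd : ∀ i, Set ((S i).St (hh i) × Act I A × (S i).St (hh i))) (i : I) :
    Set (GWState S hh i × Act ((j : I) × P j) A × GWState S hh i) :=
  {x | ∃ q a q',
    (∃ s r, (q, Act.mk (hh i) s Dir.out a, q') ∈ (S i).delta (hh i) ∧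
        (q, Act.mk r i Dir.inp a, q') ∈ Kd i ∧
        (x = (Sum.inl q, Act.mk ⟨r, hh r⟩ ⟨i, hh i⟩ Dir.inp a,
              Sum.inr (q, Act.mk (hh i) s Dir.out a, q')) ∨
         x = (Sum.inr (q, Act.mk (hh i) s Dir.out a, q'),
              Act.mk ⟨i, hh i⟩ ⟨i, s⟩ Dir.out a, Sum.inl q'))) ∨
    (∃ s r, (q, Act.mk s (hh i) Dir.inp a, q') ∈ (S i).delta (hh i) ∧
        (q, Act.mk i r Dir.out a, q') ∈ Kd i ∧
        (x = (Sum.inl q, Act.mk ⟨i, s⟩ ⟨i, hh i⟩ Dir.inp a,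
              Sum.inr (q, Act.mk s (hh i) Dir.inp a, q')) ∨
         x = (Sum.inr (q, Act.mk s (hh i) Dir.inp a, q'),
              Act.mk ⟨i, hh i⟩ ⟨r, hh r⟩ Dir.out a, Sum.inl q')))}

open Classical in
/-- State type of the machine of participant `⟨i, p⟩` in the multicomposition:
the gateway state type if `p` is the interface of system `i`, the original
state type otherwise. -/
noncomputable def MCSt (S : ∀ i, CS (P i) A) (hh : ∀ i, P i) (x : (i : I) × P i) : Type :=
  if x.2 = hh x.1 then GWState S hh x.1 else (S x.1).St x.2

/-- The multicomposition `MC({S_i}, K)`: all machines of the single systems,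
with the machine of each interface `hh i` replaced by its gateway. -/
noncomputable def MC (S : ∀ i, CS (P i) A) (hh : ∀ i, P i)
    (Kd : ∀ i, Set ((S i).St (hh i) × Act I A × (S i).St (hh i))) :
    CS ((i : I) × P i) A where
  St := MCSt S hh
  init := fun x => by
    by_cases hp : x.2 = hh x.1
    · have h : MCSt S hh x = GWState S hh x.1 := by simp [MCSt, hp]
      rw [h]; exact Sum.inl ((S x.1).init (hh x.1))
    · have h : MCSt S hh x = (S x.1).St x.2 := by simp [MCSt, hp]
      rw [h]; exact (S x.1).init x.2
  delta := fun x => by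
    by_cases hp : x.2 = hh x.1
    · have h : MCSt S hh x = GWState S hh x.1 := by simp [MCSt, hp]
      rw [h]; exact GWdelta S hh Kd x.1
    · have h : MCSt S hh x = (S x.1).St x.2 := by simp [MCSt, hp]
      rw [h]
      exact {t | ∃ q l q', (q, l, q') ∈ (S x.1).delta x.2 ∧ t = (q, liftAct x.1 l, q')}

/-- The state of the gateway of interface `hh i` in a configuration of the
multicomposition, as an element of `GWState`. -/
noncomputable def toGW (S : ∀ i, CS (P i) A) (hh : ∀ i, P i) (i : I)
    (x : MCSt S hh ⟨i, hh i⟩) : GWState S hh i :=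
  cast (by simp [MCSt]) x

/-- The state of a non-interface participant in a configuration of the
multicomposition, as an element of its original state type. -/
noncomputable def toLoc (S : ∀ i, CS (P i) A) (hh : ∀ i, P i) {i : I} {p : P i}
    (hp : p ≠ hh i) (x : MCSt S hh ⟨i, p⟩) : (S i).St p :=
  cast (by simp [MCSt, hp]) x

/-- Projection of a configuration of the multicomposition to system `S i`,
assuming the gateway state of `hh i` is not a fresh intermediate state
(i.e. it is of the form `Sum.inl q`). -/
noncomputable def projSys (S : ∀ i, CS (P i) A) (hh : ∀ i, P i)
    (Kd : ∀ i, Set ((S i).St (hh i) × Act I A × (S i).St (hh i)))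
    (i : I) (s : Config (MC S hh Kd))
    (hq : ∃ q, toGW S hh i (s.st ⟨i, hh i⟩) = Sum.inl q) : Config (S i) where
  st := fun p => by
    by_cases hp : p = hh i
    · rw [hp]; exact hq.choose
    · exact toLoc S hh hp (s.st ⟨i, p⟩)
  ch := fun p q => s.ch ⟨i, p⟩ ⟨i, q⟩

/-- Projection of a configuration of the multicomposition to the connection
policy `K`, assuming no gateway is in a fresh intermediate state. -/
noncomputable def projPolicy (S : ∀ i, CS (P i) A) (hh : ∀ i, P i)
    (Kd : ∀ i, Set ((S i).St (hh i) × Act I A × (S i).St (hh i)))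
    (s : Config (MC S hh Kd))
    (hq : ∀ i, ∃ q, toGW S hh i (s.st ⟨i, hh i⟩) = Sum.inl q) :
    Config (policyCS S hh Kd) where
  st := fun i => (hq i).choose
  ch := fun i j => s.ch ⟨i, hh i⟩ ⟨j, hh j⟩

end Composition

end CFSM

set_option linter.dupNamespace false
namespace CFSM
section Aux
variable {I : Type} {P : I → Type} {A : Type}
variable (S : ∀ i, CS (P i) A) (hh : ∀ i, P i)
  (Kd : ∀ i, Set ((S i).St (hh i) × Act I A × (S i).St (hh i)))

theorem heq_mpr {A B : Sort _} (e : A = B) (v : B) : HEq (Eq.mpr e v) v := by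
  subst e; rfl

theorem mem_iff_of_heq {T G C : Type} (e : T = G) (s : Set (T × C × T)) (t : Set (G × C × G))
    (hst : HEq s t) (x y : T) (l : C) :
    (x, l, y) ∈ s ↔ (cast e x, l, cast e y) ∈ t := by
  subst e; rw [eq_of_heq hst]; simp

theorem delta_gw_heq (i : I) :
    HEq ((MC S hh Kd).delta ⟨i, hh i⟩) (GWdelta S hh Kd i) := by
  simp only [MC]
  rw [dif_pos trivial]
  exact heq_mpr _ _

theorem mem_delta_gw (i : I) (x y : (MC S hh Kd).St ⟨i, hh i⟩) (l) :
    (x, l, y) ∈ (MC S hh Kd).delta ⟨i, hh i⟩ ↔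
      (toGW S hh i x, l, toGW S hh i y) ∈ GWdelta S hh Kd i :=
  mem_iff_of_heq _ _ _ (delta_gw_heq S hh Kd i) x y l

theorem delta_loc_heq (i : I) (p : P i) (hp : p ≠ hh i) :
    HEq ((MC S hh Kd).delta ⟨i, p⟩)
      {t : (S i).St p × Act ((j : I) × P j) A × (S i).St p |
        ∃ q l q', (q, l, q') ∈ (S i).delta p ∧ t = (q, liftAct i l, q')} := by
  simp only [MC]
  rw [dif_neg hp]
  exact heq_mpr _ _

theorem mem_delta_loc (i : I) (p : P i) (hp : p ≠ hh i)
    (x y : (MC S hh Kd).St ⟨i, p⟩) (l) :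
    (x, l, y) ∈ (MC S hh Kd).delta ⟨i, p⟩ ↔
      ∃ q l0 q', (q, l0, q') ∈ (S i).delta p ∧
        toLoc S hh hp x = q ∧ l = liftAct i l0 ∧ toLoc S hh hp y = q' :=
  Iff.trans (mem_iff_of_heq _ _ _ (delta_loc_heq S hh Kd i p hp) x y l) (by
    constructor
    · rintro ⟨q, l0, q', hd, he⟩
      rw [Prod.ext_iff, Prod.ext_iff] at he
      exact ⟨q, l0, q', hd, he.1, he.2.1, he.2.2⟩
    · rintro ⟨q, l0, q', hd, h1, h2, h3⟩
      exact ⟨q, l0, q', hd, by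
        rw [Prod.ext_iff, Prod.ext_iff]
        exact ⟨h1, h2, h3⟩⟩)

theorem cast_mpr {T G : Sort _} (e e' : T = G) (v : G) : cast e (Eq.mpr e' v) = v := by
  subst e; rfl

theorem toGW_init (i : I) :
    toGW S hh i ((MC S hh Kd).initConfig.st ⟨i, hh i⟩) = Sum.inl ((S i).init (hh i)) := by
  show toGW S hh i ((MC S hh Kd).init ⟨i, hh i⟩) = _
  simp only [MC]
  rw [dif_pos trivial]
  exact cast_mpr _ _ _

theorem toLoc_init (i : I) (p : P i) (hp : p ≠ hh i) :
    toLoc S hh hp ((MC S hh Kd).initConfig.st ⟨i, p⟩) = (S i).init p := by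
  show toLoc S hh hp ((MC S hh Kd).init ⟨i, p⟩) = _
  simp only [MC]
  rw [dif_neg hp]
  exact cast_mpr _ _ _

theorem Config.ext' {Pp A : Type} {S : CS Pp A} {c c' : Config S}
    (h1 : c.st = c'.st) (h2 : c.ch = c'.ch) : c = c' := by
  cases c; cases c'; cases h1; cases h2; rfl

open Classical in
/-- The configuration of `S i` determined by a gateway state `q` and a
configuration of the multicomposition. -/
noncomputable def repCfg (i : I) (s : Config (MC S hh Kd)) (q : (S i).St (hh i)) :
    Config (S i) where
  st := fun p =>
    if hp : p = hh i then cast (congrArg (S i).St hp.symm) q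
    else toLoc S hh hp (s.st ⟨i, p⟩)
  ch := fun p r => s.ch ⟨i, p⟩ ⟨i, r⟩

theorem repCfg_st_self (i : I) (s : Config (MC S hh Kd)) (q : (S i).St (hh i)) :
    (repCfg S hh Kd i s q).st (hh i) = q := by
  unfold repCfg
  dsimp only
  rw [dif_pos rfl]
  exact eq_of_heq (cast_heq _ _)

theorem repCfg_st_ne (i : I) (s : Config (MC S hh Kd)) (q : (S i).St (hh i))
    {p : P i} (hp : p ≠ hh i) :
    (repCfg S hh Kd i s q).st p = toLoc S hh hp (s.st ⟨i, p⟩) := by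
  unfold repCfg
  dsimp only
  rw [dif_neg hp]

theorem Kd_shape {CM : Set (I × A × I)} (hK : IsConnPolicy S hh CM Kd) (i : I) :
    ∀ t ∈ Kd i, (∃ j a, j ≠ i ∧ t.2.1 = Act.mk i j Dir.out a) ∨
      (∃ j a, j ≠ i ∧ t.2.1 = Act.mk j i Dir.inp a) := by
  obtain ⟨hsat, hmin⟩ := hK i
  set d' := {t ∈ Kd i | (∃ j a, j ≠ i ∧ t.2.1 = Act.mk i j Dir.out a) ∨
      (∃ j a, j ≠ i ∧ t.2.1 = Act.mk j i Dir.inp a)} with hd'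
  have hsub : d' ⊆ Kd i := fun t ht => ht.1
  have hsat' : PolicySat S hh CM i d' := by
    constructor
    · intro q r a q' hq
      obtain ⟨j, hji, hcm, hd⟩ := hsat.1 q r a q' hq
      exact ⟨j, hji, hcm, hd, Or.inl ⟨j, a, hji, rfl⟩⟩
    · intro q r a q' hq
      obtain ⟨j, hji, hcm, hd⟩ := hsat.2 q r a q' hq
      exact ⟨j, hji, hcm, hd, Or.inr ⟨j, a, hji, rfl⟩⟩
  intro t ht
  rw [← hmin d' hsub hsat'] at ht
  exact ht.2

end Aux
end CFSM

namespace CFSM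
section Inv
variable {I : Type} {P : I → Type} {A : Type}
variable (S : ∀ i, CS (P i) A) (hh : ∀ i, P i)
  (Kd : ∀ i, Set ((S i).St (hh i) × Act I A × (S i).St (hh i)))

theorem sigma_ne_of_fst {j i : I} (h : j ≠ i) (a : P j) (b : P i) :
    (⟨j, a⟩ : (k : I) × P k) ≠ ⟨i, b⟩ := fun he => h (congrArg Sigma.fst he)

theorem sigma_snd_eq {i : I} {a b : P i} (h : (⟨i, a⟩ : (k : I) × P k) = ⟨i, b⟩) : a = b := by
  simpa using h

/-- The reachability invariant at index `i`. -/
def InvAt (i : I) (s : Config (MC S hh Kd)) : Prop :=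
  (∀ q, toGW S hh i (s.st ⟨i, hh i⟩) = Sum.inl q → repCfg S hh Kd i s q ∈ RC (S i)) ∧
  (∀ q l q', toGW S hh i (s.st ⟨i, hh i⟩) = Sum.inr (q, l, q') →
     (l.dir = Dir.out → repCfg S hh Kd i s q ∈ RC (S i)) ∧
     (l.dir = Dir.inp → repCfg S hh Kd i s q' ∈ RC (S i)))

/-- The reachability invariant for the multicomposition. -/
def Inv (s : Config (MC S hh Kd)) : Prop := ∀ i, InvAt S hh Kd i s

theorem repCfg_congr (i : I) {s s' : Config (MC S hh Kd)}
    (hst : ∀ p : P i, p ≠ hh i → s'.st ⟨i, p⟩ = s.st ⟨i, p⟩)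
    (hch : ∀ p r : P i, s'.ch ⟨i, p⟩ ⟨i, r⟩ = s.ch ⟨i, p⟩ ⟨i, r⟩) (q) :
    repCfg S hh Kd i s' q = repCfg S hh Kd i s q := by
  refine Config.ext' (funext fun p => ?_) (funext fun p => funext fun r => hch p r)
  by_cases hp : p = hh i
  · subst hp; rw [repCfg_st_self, repCfg_st_self]
  · rw [repCfg_st_ne S hh Kd i _ _ hp, repCfg_st_ne S hh Kd i _ _ hp, hst p hp]

theorem InvAt_congr (i : I) {s s' : Config (MC S hh Kd)}
    (hgw : s'.st ⟨i, hh i⟩ = s.st ⟨i, hh i⟩)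
    (hst : ∀ p : P i, p ≠ hh i → s'.st ⟨i, p⟩ = s.st ⟨i, p⟩)
    (hch : ∀ p r : P i, s'.ch ⟨i, p⟩ ⟨i, r⟩ = s.ch ⟨i, p⟩ ⟨i, r⟩)
    (h : InvAt S hh Kd i s) : InvAt S hh Kd i s' := by
  have hg : toGW S hh i (s'.st ⟨i, hh i⟩) = toGW S hh i (s.st ⟨i, hh i⟩) := congrArg _ hgw
  constructor
  · intro q hq
    rw [hg] at hq
    rw [repCfg_congr S hh Kd i hst hch]
    exact h.1 q hq
  · intro q l q' hq
    rw [hg] at hq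
    obtain ⟨h1, h2⟩ := h.2 q l q' hq
    exact ⟨fun hd => (repCfg_congr S hh Kd i hst hch q) ▸ h1 hd,
           fun hd => (repCfg_congr S hh Kd i hst hch q') ▸ h2 hd⟩

theorem InvAt_step (i) {s s' : Config (MC S hh Kd)}
    (hgw : toGW S hh i (s'.st ⟨i, hh i⟩) = toGW S hh i (s.st ⟨i, hh i⟩))
    (hstep : ∀ q0, Step (S i) (repCfg S hh Kd i s q0) (repCfg S hh Kd i s' q0))
    (h : InvAt S hh Kd i s) : InvAt S hh Kd i s' := by
  constructor
  · intro q hq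
    rw [hgw] at hq
    exact Relation.ReflTransGen.tail (h.1 q hq) (hstep q)
  · intro q l q' hq
    rw [hgw] at hq
    obtain ⟨h1, h2⟩ := h.2 q l q' hq
    exact ⟨fun hd => Relation.ReflTransGen.tail (h1 hd) (hstep q),
           fun hd => Relation.ReflTransGen.tail (h2 hd) (hstep q')⟩

theorem Inv_init : Inv S hh Kd (MC S hh Kd).initConfig := by
  intro i
  constructor
  · intro q hq
    rw [toGW_init] at hq
    obtain rfl : (S i).init (hh i) = q := by simpa using hq
    have : repCfg S hh Kd i (MC S hh Kd).initConfig ((S i).init (hh i)) =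
        (S i).initConfig := by
      refine Config.ext' (funext fun p => ?_) rfl
      by_cases hp : p = hh i
      · subst hp; rw [repCfg_st_self]; rfl
      · rw [repCfg_st_ne S hh Kd i _ _ hp, toLoc_init]; rfl
    rw [this]
    exact Relation.ReflTransGen.refl
  · intro q l q' hq
    rw [toGW_init] at hq
    exact absurd hq (by simp)

end Inv
end CFSM

namespace CFSM
section StepLemma
variable {I : Type} {P : I → Type} {A : Type}
variable (S : ∀ i, CS (P i) A) (hh : ∀ i, P i)
  (Kd : ∀ i, Set ((S i).St (hh i) × Act I A × (S i).St (hh i)))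

theorem Inv_step {CM : Set (I × A × I)} (hK : IsConnPolicy S hh CM Kd)
    {s s' : Config (MC S hh Kd)}
    (hInv : Inv S hh Kd s) (hstep : Step (MC S hh Kd) s s') : Inv S hh Kd s' := by
  obtain ⟨L, hL⟩ := hstep
  obtain ⟨⟨j, pm⟩, ⟨j2, pr⟩, ld, la⟩ := L
  cases ld
  case out =>
    obtain ⟨hdelta, hst, hch1, hch2⟩ := hL
    intro i
    by_cases hj : j = i
    · subst hj
      by_cases hpm : pm = hh j
      · subst hpm
        -- Case C-out: the gateway of system j moved (an output half)
        obtain ⟨q, a, q', hc⟩ := (mem_delta_gw S hh Kd j _ _ _).mp hdelta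
        rcases hc with ⟨s0, r, hd, hkd, hx | hx⟩ | ⟨s0, r, hd, hkd, hx | hx⟩
        · -- first half of out-kind: input action, dir mismatch
          exact absurd (congrArg (fun t => t.2.1.dir) hx) (by simp)
        · -- C2: second half of out-kind
          simp only [Prod.mk.injEq] at hx
          obtain ⟨hx1, hx2, hx3⟩ := hx
          simp only [Act.mk.injEq, Sigma.mk.inj_iff, heq_eq_eq, true_and] at hx2
          obtain ⟨⟨hj2, hpr⟩, hla⟩ := hx2
          have hj2s : j = j2 := hj2.symm
          subst hj2s
          obtain rfl : pr = s0 := eq_of_heq hpr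
          subst hla
          have hRC : repCfg S hh Kd j s q ∈ RC (S j) :=
            ((hInv j).2 q _ q' hx1).1 rfl
          have hstep1 : StepL (S j) (repCfg S hh Kd j s q)
              (Act.mk (hh j) pr Dir.out la) (repCfg S hh Kd j s' q') := by
            refine ⟨?_, ?_, ?_, ?_⟩
            · rw [repCfg_st_self, repCfg_st_self]; exact hd
            · intro p hp
              by_cases hph : p = hh j
              · exact absurd hph hp
              · rw [repCfg_st_ne S hh Kd j _ _ hph, repCfg_st_ne S hh Kd j _ _ hph,
                  hst ⟨j, p⟩ (fun he => hph (sigma_snd_eq he))]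
            · exact hch1
            · intro p r2 hpr2
              exact hch2 ⟨j, p⟩ ⟨j, r2⟩ (fun he => by
                rw [Prod.ext_iff] at he
                exact hpr2 (by rw [Prod.ext_iff]
                               exact ⟨sigma_snd_eq he.1, sigma_snd_eq he.2⟩))
          have hRC' : repCfg S hh Kd j s' q' ∈ RC (S j) :=
            Relation.ReflTransGen.tail hRC ⟨_, hstep1⟩
          constructor
          · intro q0 h0
            rw [hx3] at h0
            obtain rfl : q' = q0 := by simpa using h0
            exact hRC'
          · intro q0 l0 q0' h0
            rw [hx3] at h0
            exact absurd h0 (by simp)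
        · -- first half of inp-kind: input action, dir mismatch
          exact absurd (congrArg (fun t => t.2.1.dir) hx) (by simp)
        · -- C4: second half of inp-kind
          simp only [Prod.mk.injEq] at hx
          obtain ⟨hx1, hx2, hx3⟩ := hx
          simp only [Act.mk.injEq, Sigma.mk.inj_iff, true_and] at hx2
          obtain ⟨⟨hj2, hpr⟩, hla⟩ := hx2
          have hj2s : r = j2 := hj2.symm
          subst hj2s
          obtain rfl : pr = hh r := eq_of_heq hpr
          subst hla
          have hr : r ≠ j := by
            rcases Kd_shape S hh Kd hK j _ hkd with ⟨j0, a0, hji, he⟩ | ⟨j0, a0, hji, he⟩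
            · simp only [Act.mk.injEq, true_and] at he
              obtain ⟨rfl, -⟩ := he
              exact hji
            · exact absurd (congrArg Act.dir he) (by simp)
          have hcongr : ∀ q0, repCfg S hh Kd j s' q0 = repCfg S hh Kd j s q0 :=
            repCfg_congr S hh Kd j
              (fun p hp => hst ⟨j, p⟩ (fun he => hp (sigma_snd_eq he)))
              (fun p r2 => hch2 ⟨j, p⟩ ⟨j, r2⟩ (fun he => by
                rw [Prod.ext_iff] at he
                exact hr (congrArg Sigma.fst he.2).symm))
          have hRC : repCfg S hh Kd j s q' ∈ RC (S j) :=
            ((hInv j).2 q _ q' hx1).2 rfl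
          constructor
          · intro q0 h0
            rw [hx3] at h0
            obtain rfl : q' = q0 := by simpa using h0
            rw [hcongr]; exact hRC
          · intro q0 l0 q0' h0
            rw [hx3] at h0
            exact absurd h0 (by simp)
      · -- Case B-out: a non-interface participant of system j moved
        obtain ⟨q, l0, q', hdm, hx, hLe, hy⟩ :=
          (mem_delta_loc S hh Kd j pm hpm _ _ _).mp hdelta
        obtain ⟨ls, lr, ld0, la0⟩ := l0
        simp only [liftAct, Act.mk.injEq, Sigma.mk.inj_iff, heq_eq_eq, true_and] at hLe
        obtain ⟨hls, ⟨hj2, hlr⟩, hld, hla⟩ := hLe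
        subst hls
        have hj2s : j = j2 := hj2.symm
        subst hj2s
        obtain rfl : pr = lr := eq_of_heq hlr
        subst hla
        refine InvAt_step S hh Kd j (congrArg _ (hst ⟨j, hh j⟩
          (fun he => hpm (sigma_snd_eq he).symm))) (fun q0 => ?_) (hInv j)
        refine ⟨Act.mk pm pr Dir.out la, ?_, ?_, ?_, ?_⟩
        · rw [repCfg_st_ne S hh Kd j _ _ hpm, repCfg_st_ne S hh Kd j _ _ hpm, hx, hy]
          rw [← hld] at hdm
          exact hdm
        · intro p hp
          by_cases hph : p = hh j
          · subst hph; rw [repCfg_st_self, repCfg_st_self]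
          · rw [repCfg_st_ne S hh Kd j _ _ hph, repCfg_st_ne S hh Kd j _ _ hph,
              hst ⟨j, p⟩ (fun he => hp (sigma_snd_eq he))]
        · exact hch1
        · intro p r2 hpr2
          exact hch2 ⟨j, p⟩ ⟨j, r2⟩ (fun he => by
            rw [Prod.ext_iff] at he
            exact hpr2 (by rw [Prod.ext_iff]
                           exact ⟨sigma_snd_eq he.1, sigma_snd_eq he.2⟩))
    · -- Case A-out: a participant of another system moved
      refine InvAt_congr S hh Kd i (hst ⟨i, hh i⟩ (sigma_ne_of_fst (fun h => hj h.symm) _ _))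
        (fun p hp => hst ⟨i, p⟩ (sigma_ne_of_fst (fun h => hj h.symm) _ _))
        (fun p r => hch2 ⟨i, p⟩ ⟨i, r⟩ (fun he => by
          rw [Prod.ext_iff] at he
          exact hj (congrArg Sigma.fst he.1).symm)) (hInv i)
  case inp =>
    obtain ⟨hdelta, hst, hch1, hch2⟩ := hL
    intro i
    by_cases hj2 : j2 = i
    · subst hj2
      by_cases hpr : pr = hh j2
      · subst hpr
        -- Case C-inp: the gateway of system j2 moved (an input half)
        obtain ⟨q, a, q', hc⟩ := (mem_delta_gw S hh Kd j2 _ _ _).mp hdelta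
        rcases hc with ⟨s0, r, hd, hkd, hx | hx⟩ | ⟨s0, r, hd, hkd, hx | hx⟩
        · -- C1: first half of out-kind
          simp only [Prod.mk.injEq] at hx
          obtain ⟨hx1, hx2, hx3⟩ := hx
          simp only [Act.mk.injEq, Sigma.mk.inj_iff, true_and] at hx2
          obtain ⟨⟨hj, hpm⟩, hla⟩ := hx2
          subst hj
          obtain rfl : pm = hh j := eq_of_heq hpm
          subst hla
          have hr : j ≠ j2 := by
            rcases Kd_shape S hh Kd hK j2 _ hkd with ⟨j0, a0, hji, he⟩ | ⟨j0, a0, hji, he⟩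
            · exact absurd (congrArg Act.dir he) (by simp)
            · simp only [Act.mk.injEq, true_and] at he
              obtain ⟨rfl, -⟩ := he
              exact hji
          have hcongr : ∀ q0, repCfg S hh Kd j2 s' q0 = repCfg S hh Kd j2 s q0 :=
            repCfg_congr S hh Kd j2
              (fun p hp => hst ⟨j2, p⟩ (fun he => hp (sigma_snd_eq he)))
              (fun p r2 => hch2 ⟨j2, p⟩ ⟨j2, r2⟩ (fun he => by
                rw [Prod.ext_iff] at he
                exact hr (congrArg Sigma.fst he.1).symm))
          have hRC : repCfg S hh Kd j2 s q ∈ RC (S j2) := (hInv j2).1 q hx1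
          constructor
          · intro q0 h0
            rw [hx3] at h0
            exact absurd h0 (by simp)
          · intro q0 l0 q0' h0
            rw [hx3] at h0
            simp only [Sum.inr.injEq, Prod.mk.injEq] at h0
            obtain ⟨rfl, rfl, rfl⟩ := h0
            constructor
            · intro _
              rw [hcongr]; exact hRC
            · intro hdir
              exact absurd hdir (by simp)
        · -- second half of out-kind: output action, dir mismatch
          exact absurd (congrArg (fun t => t.2.1.dir) hx) (by simp)
        · -- C3: first half of inp-kind
          simp only [Prod.mk.injEq] at hx
          obtain ⟨hx1, hx2, hx3⟩ := hx
          simp only [Act.mk.injEq, Sigma.mk.inj_iff, heq_eq_eq, true_and] at hx2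
          obtain ⟨⟨hj, hpm⟩, hla⟩ := hx2
          have hjs : j2 = j := hj.symm
          subst hjs
          obtain rfl : pm = s0 := eq_of_heq hpm
          subst hla
          have hstep1 : StepL (S j2) (repCfg S hh Kd j2 s q)
              (Act.mk pm (hh j2) Dir.inp la) (repCfg S hh Kd j2 s' q') := by
            refine ⟨?_, ?_, ?_, ?_⟩
            · rw [repCfg_st_self, repCfg_st_self]; exact hd
            · intro p hp
              by_cases hph : p = hh j2
              · exact absurd hph hp
              · rw [repCfg_st_ne S hh Kd j2 _ _ hph, repCfg_st_ne S hh Kd j2 _ _ hph,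
                  hst ⟨j2, p⟩ (fun he => hph (sigma_snd_eq he))]
            · exact hch1
            · intro p r2 hpr2
              exact hch2 ⟨j2, p⟩ ⟨j2, r2⟩ (fun he => by
                rw [Prod.ext_iff] at he
                exact hpr2 (by rw [Prod.ext_iff]
                               exact ⟨sigma_snd_eq he.1, sigma_snd_eq he.2⟩))
          have hRC' : repCfg S hh Kd j2 s' q' ∈ RC (S j2) :=
            Relation.ReflTransGen.tail ((hInv j2).1 q hx1) ⟨_, hstep1⟩
          constructor
          · intro q0 h0
            rw [hx3] at h0
            exact absurd h0 (by simp)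
          · intro q0 l0 q0' h0
            rw [hx3] at h0
            simp only [Sum.inr.injEq, Prod.mk.injEq] at h0
            obtain ⟨rfl, rfl, rfl⟩ := h0
            constructor
            · intro hdir
              exact absurd hdir (by simp)
            · intro _
              exact hRC'
        · -- second half of inp-kind: output action, dir mismatch
          exact absurd (congrArg (fun t => t.2.1.dir) hx) (by simp)
      · -- Case B-inp
        obtain ⟨q, l0, q', hdm, hx, hLe, hy⟩ :=
          (mem_delta_loc S hh Kd j2 pr hpr _ _ _).mp hdelta
        obtain ⟨ls, lr, ld0, la0⟩ := l0
        simp only [liftAct, Act.mk.injEq, Sigma.mk.inj_iff, heq_eq_eq, true_and] at hLe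
        obtain ⟨⟨hj, hls⟩, hlr, hld, hla⟩ := hLe
        have hjs : j2 = j := hj.symm
        subst hjs
        obtain rfl : pm = ls := eq_of_heq hls
        subst hlr
        subst hla
        refine InvAt_step S hh Kd j2 (congrArg _ (hst ⟨j2, hh j2⟩
          (fun he => hpr (sigma_snd_eq he).symm))) (fun q0 => ?_) (hInv j2)
        refine ⟨Act.mk pm pr Dir.inp la, ?_, ?_, ?_, ?_⟩
        · rw [repCfg_st_ne S hh Kd j2 _ _ hpr, repCfg_st_ne S hh Kd j2 _ _ hpr, hx, hy]
          rw [← hld] at hdm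
          exact hdm
        · intro p hp
          by_cases hph : p = hh j2
          · subst hph; rw [repCfg_st_self, repCfg_st_self]
          · rw [repCfg_st_ne S hh Kd j2 _ _ hph, repCfg_st_ne S hh Kd j2 _ _ hph,
              hst ⟨j2, p⟩ (fun he => hp (sigma_snd_eq he))]
        · exact hch1
        · intro p r2 hpr2
          exact hch2 ⟨j2, p⟩ ⟨j2, r2⟩ (fun he => by
            rw [Prod.ext_iff] at he
            exact hpr2 (by rw [Prod.ext_iff]
                           exact ⟨sigma_snd_eq he.1, sigma_snd_eq he.2⟩))
    · -- Case A-inp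
      refine InvAt_congr S hh Kd i (hst ⟨i, hh i⟩ (sigma_ne_of_fst (fun h => hj2 h.symm) _ _))
        (fun p hp => hst ⟨i, p⟩ (sigma_ne_of_fst (fun h => hj2 h.symm) _ _))
        (fun p r => hch2 ⟨i, p⟩ ⟨i, r⟩ (fun he => by
          rw [Prod.ext_iff] at he
          exact hj2 (congrArg Sigma.fst he.2).symm)) (hInv i)

end StepLemma
end CFSM

namespace CFSM
section Final
variable {I : Type} {P : I → Type} {A : Type}
variable (S : ∀ i, CS (P i) A) (hh : ∀ i, P i)
  (Kd : ∀ i, Set ((S i).St (hh i) × Act I A × (S i).St (hh i)))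

theorem projSys_eq_repCfg (i : I) (s : Config (MC S hh Kd))
    (hq : ∃ q, toGW S hh i (s.st ⟨i, hh i⟩) = Sum.inl q) :
    projSys S hh Kd i s hq = repCfg S hh Kd i s hq.choose := by
  refine Config.ext' (funext fun p => ?_) rfl
  by_cases hp : p = hh i
  · subst hp
    unfold projSys
    dsimp only
    rw [dif_pos rfl, repCfg_st_self]
    rfl
  · unfold projSys
    dsimp only
    rw [dif_neg hp, repCfg_st_ne S hh Kd i _ _ hp]

theorem Inv_of_RC {CM : Set (I × A × I)} (hK : IsConnPolicy S hh CM Kd)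
    {s : Config (MC S hh Kd)} (hs : s ∈ RC (MC S hh Kd)) : Inv S hh Kd s := by
  have h : Relation.ReflTransGen (Step (MC S hh Kd)) ((MC S hh Kd).initConfig) s := hs
  clear hs
  induction h with
  | refl => exact Inv_init S hh Kd
  | tail hr hstep ih => exact Inv_step S hh Kd hK ih hstep

end Final
end CFSM


open CFSM in
/-- if in a reachable configuration of the multicomposition the gateway of
`hh i` is not in a fresh intermediate state, then the projection to `S i` is reachable in `S i`. -/
theorem projSys_reachable
    {I : Type} [Finite I] {P : I → Type} [∀ i, Finite (P i)] {A : Type} [Finite A]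
    (S : ∀ i, CS (P i) A)
    (hfin : ∀ i p, Finite ((S i).St p))
    (hwf : ∀ i, (S i).WellFormed)
    (hh : ∀ i, P i)
    (CM : Set (I × A × I)) (hCM : IsConnModel S hh CM)
    (Kd : ∀ i, Set ((S i).St (hh i) × Act I A × (S i).St (hh i)))
    (hK : IsConnPolicy S hh CM Kd)
    (s : Config (MC S hh Kd)) (hs : s ∈ RC (MC S hh Kd))
    (i : I) (hq : ∃ q, toGW S hh i (s.st ⟨i, hh i⟩) = Sum.inl q) :
    projSys S hh Kd i s hq ∈ RC (S i) := by
  rw [projSys_eq_repCfg]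
  exact (Inv_of_RC S hh Kd hK hs i).1 hq.choose hq.choose_spec
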